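/- No integer congruent to 23 modulo 72 can be written as a sum of two squares and at most one power of 2. -/
import Mathlib


/-- A natural number `m` is a sum of two squares and at most one power of 2. -/
def IsSumTwoSquaresAddAtMostOnePow (m : ℕ) : Prop :=
  ∃ x y : ℤ, (m : ℤ) = x ^ 2 + y ^ 2 ∨ ∃ a : ℕ, (m : ℤ) = x ^ 2 + y ^ 2 + 2 ^ a

theorem not_one_pow_of_23_mod_72 (m : ℕ) (hm : m % 72 = 23) :
    ¬ IsSumTwoSquaresAddAtMostOnePow m := by
  have h8 : (m : ZMod 8) = 7 := by
    have h : m % 8 = 7 := by omega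
    rw [← ZMod.natCast_mod, h]; rfl
  have h9 : (m : ZMod 9) = 5 := by
    have h : m % 9 = 5 := by omega
    rw [← ZMod.natCast_mod, h]; rfl
  rintro ⟨x, y, h | ⟨a, h⟩⟩
  · have := congrArg (Int.cast : ℤ → ZMod 8) h
    push_cast at this
    rw [h8] at this
    revert this
    exact fun hxy => by
      have : ∀ u v : ZMod 8, (7 : ZMod 8) ≠ u ^ 2 + v ^ 2 := by decide
      exact this _ _ hxy
  · match a with
    | 0 =>
      have := congrArg (Int.cast : ℤ → ZMod 8) h
      push_cast at this
      rw [h8] at this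
      have h' : ∀ u v : ZMod 8, (7 : ZMod 8) ≠ u ^ 2 + v ^ 2 + 2 ^ 0 := by decide
      exact h' _ _ this
    | 1 =>
      have := congrArg (Int.cast : ℤ → ZMod 9) h
      push_cast at this
      rw [h9] at this
      have h' : ∀ u v : ZMod 9, (5 : ZMod 9) ≠ u ^ 2 + v ^ 2 + 2 ^ 1 := by decide
      exact h' _ _ this
    | 2 =>
      have := congrArg (Int.cast : ℤ → ZMod 8) h
      push_cast at this
      rw [h8] at this
      have h' : ∀ u v : ZMod 8, (7 : ZMod 8) ≠ u ^ 2 + v ^ 2 + 2 ^ 2 := by decide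
      exact h' _ _ this
    | (b + 3) =>
      have := congrArg (Int.cast : ℤ → ZMod 8) h
      push_cast at this
      rw [h8] at this
      have hz : (2 : ZMod 8) ^ (b + 3) = 0 := by
        rw [pow_add]; simp [show (2 : ZMod 8) ^ 3 = 0 from rfl]
      rw [hz] at this
      have h' : ∀ u v : ZMod 8, (7 : ZMod 8) ≠ u ^ 2 + v ^ 2 + 0 := by decide
      exact h' _ _ this
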